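/- Fix n and positions with 1bar at position i and 1 at position j, i < j, in a complete Gessel word of length 2n with exactly one 1 and one 1bar. Then the number of such words equals the sum over k1 from 1 to i-1 and k2 from 0 to j-1 of a_{0,k1}(i-1) * a_{k1-1,k2-1}(j-i-1) * a_{k2,0}(2n-j), where a_{p,q}(m) is the number of nonnegative lattice paths from height p to height q in m up/down steps. -/

import Mathlib

/-- The alphabet of Gessel words: letters `1`, `2`, `1̄`, `2̄`. -/
inductive GLetter | one | two | onebar | twobar
deriving DecidableEq

instance : Fintype GLetter where
  elems := {.one, .two, .onebar, .twobar}
  complete := by intro x; cases x <;> simp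

open Classical

/-- Number of occurrences of the letter `x` among the first `k` letters of `w`. -/
noncomputable def cnt (m : ℕ) (w : Fin m → GLetter) (x : GLetter) (k : ℕ) : ℕ :=
  (Finset.univ.filter (fun i : Fin m => (i : ℕ) < k ∧ w i = x)).card

/-- Gessel word condition: every prefix has `N₂ ≥ N_{2̄}` and `N₁+N₂ ≥ N_{1̄}+N_{2̄}`. -/
def IsGessel (m : ℕ) (w : Fin m → GLetter) : Prop :=
  ∀ k ≤ m, cnt m w .twobar k ≤ cnt m w .two k ∧
    cnt m w .onebar k + cnt m w .twobar k ≤ cnt m w .one k + cnt m w .two k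

/-- Complete: equally many occurrences of each letter and its bar. -/
def IsCompleteGW (m : ℕ) (w : Fin m → GLetter) : Prop :=
  cnt m w .one m = cnt m w .onebar m ∧ cnt m w .two m = cnt m w .twobar m
/-- `C(m, z)` with the convention that it vanishes for negative lower index. -/
def choosez (m : ℕ) (z : ℤ) : ℕ := if z < 0 then 0 else m.choose z.toNat

/-- `a p q m`: the number of paths with steps `+1, -1` of length `m` from height `p`
to height `q` staying nonnegative, given by the reflection principle formula. -/
def aCount (p q : ℤ) (m : ℕ) : ℤ :=
  if ((m : ℤ) + p + q) % 2 = 0 then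
    (choosez m (((m : ℤ) + p - q) / 2) : ℤ) - choosez m (((m : ℤ) + p + q) / 2 + 1)
  else 0

lemma choosez_neg {m : ℕ} {z : ℤ} (h : z < 0) : choosez m z = 0 := by
  simp [choosez, h]

lemma choosez_of_gt {m : ℕ} {z : ℤ} (h : (m : ℤ) < z) : choosez m z = 0 := by
  unfold choosez
  rw [if_neg (by omega)]
  exact Nat.choose_eq_zero_of_lt (by omega)

lemma choosez_pascal (m : ℕ) (z : ℤ) :
    choosez (m + 1) z = choosez m z + choosez m (z - 1) := by
  rcases lt_trichotomy z 0 with h | h | h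
  · rw [choosez_neg h, choosez_neg h, choosez_neg (by omega)]
  · subst h
    rw [choosez_neg (by norm_num : (0:ℤ) - 1 < 0)]
    simp [choosez]
  · unfold choosez
    rw [if_neg (by omega), if_neg (by omega), if_neg (by omega)]
    have hz : z.toNat = (z - 1).toNat + 1 := by omega
    rw [hz, Nat.choose_succ_succ']
    omega

lemma choosez_symm {m : ℕ} {a b : ℤ} (h : a + b = m) : choosez m a = choosez m b := by
  rcases lt_or_ge a 0 with ha | ha
  · rw [choosez_neg ha, choosez_of_gt (by omega)]
  · rcases lt_or_ge b 0 with hb | hb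
    · rw [choosez_neg hb, choosez_of_gt (by omega)]
    · unfold choosez
      rw [if_neg (by omega), if_neg (by omega)]
      have hb' : b.toNat = m - a.toNat := by omega
      have ha' : a.toNat ≤ m := by omega
      rw [hb', Nat.choose_symm ha']

lemma aCount_succ_q (p q : ℤ) (m : ℕ) :
    aCount p q (m + 1) = aCount p (q + 1) m + aCount p (q - 1) m := by
  unfold aCount
  push_cast
  by_cases hpar : ((m : ℤ) + 1 + p + q) % 2 = 0
  · rw [if_pos hpar, if_pos (by omega), if_pos (by omega)]
    set A := ((m : ℤ) + 1 + p - q) / 2 with hA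
    set B := ((m : ℤ) + 1 + p + q) / 2 + 1 with hB
    have e1 : ((m : ℤ) + p - (q + 1)) / 2 = A - 1 := by omega
    have e2 : ((m : ℤ) + p - (q - 1)) / 2 = A := by omega
    have e3 : ((m : ℤ) + p + (q + 1)) / 2 + 1 = B := by omega
    have e4 : ((m : ℤ) + p + (q - 1)) / 2 + 1 = B - 1 := by omega
    rw [e1, e2, e3, e4, choosez_pascal m A, choosez_pascal m B]
    push_cast
    ring
  · rw [if_neg hpar, if_neg (by omega), if_neg (by omega)]
    ring

lemma aCount_negone_right (p : ℤ) (m : ℕ) : aCount p (-1) m = 0 := by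
  unfold aCount
  by_cases hpar : ((m : ℤ) + p + -1) % 2 = 0
  · rw [if_pos hpar]
    have e : ((m : ℤ) + p - -1) / 2 = ((m : ℤ) + p + -1) / 2 + 1 := by omega
    rw [e]
    ring
  · rw [if_neg hpar]


lemma choosez_zero_iff (z : ℤ) : choosez 0 z = if z = 0 then 1 else 0 := by
  rcases lt_trichotomy z 0 with h | h | h
  · rw [choosez_neg h, if_neg (by omega)]
  · subst h
    simp [choosez]
  · rw [choosez_of_gt (by exact_mod_cast h), if_neg (by omega)]

lemma aCount_zero (p q : ℤ) (hp : 0 ≤ p) (hq : 0 ≤ q) :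
    aCount p q 0 = if p = q then 1 else 0 := by
  unfold aCount
  simp only [Nat.cast_zero, zero_add]
  by_cases hpq : p = q
  · subst hpq
    rw [if_pos (by omega), if_pos rfl, choosez_zero_iff, choosez_zero_iff,
      if_pos (by omega), if_neg (by omega)]
    simp
  · rw [if_neg hpq]
    by_cases hpar : (p + q) % 2 = 0
    · rw [if_pos hpar, choosez_zero_iff, choosez_zero_iff,
        if_neg (by omega), if_neg (by omega)]
      simp
    · rw [if_neg hpar]

def eps (b : Bool) : ℤ := if b then 1 else -1

def hgt {m : ℕ} (p : ℤ) (f : Fin m → Bool) (k : ℕ) : ℤ :=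
  p + ∑ t : Fin m, if (t : ℕ) < k then eps (f t) else 0

noncomputable def PF (p q : ℤ) (m : ℕ) : Finset (Fin m → Bool) :=
  Finset.univ.filter (fun f => (∀ k ≤ m, 0 ≤ hgt p f k) ∧ hgt p f m = q)

lemma hgt_zero {m : ℕ} (p : ℤ) (f : Fin m → Bool) : hgt p f 0 = p := by
  simp [hgt]

lemma sum_lt_succ_step {m : ℕ} (g : Fin m → ℤ) (k : ℕ) (hk : k < m) :
    (∑ t : Fin m, if (t : ℕ) < k + 1 then g t else 0)
      = (∑ t : Fin m, if (t : ℕ) < k then g t else 0) + g ⟨k, hk⟩ := by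
  have h : ∀ t : Fin m,
      (if (t : ℕ) < k + 1 then g t else 0)
        = (if (t : ℕ) < k then g t else 0) + (if t = ⟨k, hk⟩ then g t else 0) := by
    intro t
    have ht : t = (⟨k, hk⟩ : Fin m) ↔ (t : ℕ) = k := by
      constructor
      · intro h; subst h; rfl
      · intro h; exact Fin.ext h
    by_cases h1 : (t : ℕ) < k
    · rw [if_pos (by omega), if_pos h1, if_neg (by rw [ht]; omega)]; ring
    · by_cases h2 : (t : ℕ) = k
      · rw [if_pos (by omega), if_neg (by omega), if_pos (ht.mpr h2)]; ring
      · rw [if_neg (by omega), if_neg (by omega), if_neg (by rw [ht]; omega)]; ring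
  rw [Finset.sum_congr rfl (fun t _ => h t), Finset.sum_add_distrib]
  congr 1
  rw [Finset.sum_ite_eq' Finset.univ (⟨k, hk⟩ : Fin m) g]
  simp

lemma hgt_succ {m : ℕ} (p : ℤ) (f : Fin m → Bool) (k : ℕ) (hk : k < m) :
    hgt p f (k + 1) = hgt p f k + eps (f ⟨k, hk⟩) := by
  unfold hgt
  rw [sum_lt_succ_step (fun t => eps (f t)) k hk]
  ring

def finit {m : ℕ} (f : Fin (m + 1) → Bool) : Fin m → Bool := Fin.init f

def fsnoc {m : ℕ} (g : Fin m → Bool) (b : Bool) : Fin (m + 1) → Bool := Fin.snoc g b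

lemma finit_fsnoc {m : ℕ} (g : Fin m → Bool) (b : Bool) : finit (fsnoc g b) = g :=
  Fin.init_snoc (α := fun _ => Bool) b g

lemma fsnoc_last {m : ℕ} (g : Fin m → Bool) (b : Bool) : fsnoc g b (Fin.last m) = b :=
  Fin.snoc_last (α := fun _ => Bool) b g

lemma fsnoc_finit_self {m : ℕ} (f : Fin (m + 1) → Bool) : fsnoc (finit f) (f (Fin.last m)) = f :=
  Fin.snoc_init_self (α := fun _ => Bool) f

lemma hgt_init {m : ℕ} (p : ℤ) (f : Fin (m + 1) → Bool) (k : ℕ) (hk : k ≤ m) :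
    hgt p (finit f) k = hgt p f k := by
  unfold hgt
  congr 1
  rw [Fin.sum_univ_castSucc]
  simp only [Fin.coe_castSucc, Fin.val_last, finit, Fin.init]
  rw [if_neg (by omega)]
  simp

lemma PF_neg_q {p q : ℤ} (m : ℕ) (hq : q < 0) : PF p q m = ∅ := by
  apply Finset.eq_empty_of_forall_notMem
  intro f hf
  rw [PF, Finset.mem_filter] at hf
  have h1 := hf.2.1 m le_rfl
  have h2 := hf.2.2
  omega

lemma PF_zero (p q : ℤ) :
    ((PF p q 0).card : ℤ) = if p = q ∧ 0 ≤ p then 1 else 0 := by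
  unfold PF
  by_cases h : p = q ∧ 0 ≤ p
  · rw [if_pos h, Finset.filter_true_of_mem]
    · simp [Finset.card_univ]
    · intro f _
      refine ⟨fun k hk => ?_, ?_⟩
      · interval_cases k
        rw [hgt_zero]; exact h.2
      · rw [hgt_zero]; exact h.1
  · rw [if_neg h, Finset.filter_false_of_mem]
    · simp
    · intro f _ hf
      have h1 := hf.1 0 (le_refl 0)
      have h2 := hf.2
      rw [hgt_zero] at h1 h2
      exact h ⟨h2, h1⟩

lemma PF_filter_true (p q : ℤ) (m : ℕ) (hq : 0 ≤ q) :
    ((PF p q (m + 1)).filter (fun f => f (Fin.last m) = true)).card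
      = (PF p (q - 1) m).card := by
  classical
  have hlast : (Fin.last m : ℕ) = m := rfl
  have hmem : ∀ f, f ∈ PF p q (m + 1) ↔
      ((∀ k ≤ m + 1, 0 ≤ hgt p f k) ∧ hgt p f (m + 1) = q) := by
    intro f; rw [PF, Finset.mem_filter]; simp
  have hstep : ∀ f : Fin (m + 1) → Bool,
      hgt p f (m + 1) = hgt p f m + eps (f (Fin.last m)) := by
    intro f; exact hgt_succ p f m (Nat.lt_succ_self m)
  refine Finset.card_nbij' (i := finit) (j := fun g => fsnoc g true) ?_ ?_ ?_ ?_
  · intro f hf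
    rw [Finset.mem_coe, Finset.mem_filter] at hf
    obtain ⟨hf1, hf2⟩ := hf
    rw [hmem] at hf1
    rw [Finset.mem_coe, PF, Finset.mem_filter]
    refine ⟨Finset.mem_univ _, fun k hk => ?_, ?_⟩
    · rw [hgt_init p f k hk]; exact hf1.1 k (by omega)
    · rw [hgt_init p f m le_rfl]
      have h2 := hstep f
      rw [hf1.2, hf2] at h2
      simp only [eps, if_pos trivial, if_true] at h2
      omega
  · intro g hg
    rw [PF, Finset.mem_coe, Finset.mem_filter] at hg
    rw [Finset.mem_coe, Finset.mem_filter]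
    have hini : finit (fsnoc g true) = g := finit_fsnoc g true
    have hlasteq : fsnoc g true (Fin.last m) = true := fsnoc_last g true
    have hend : hgt p (fsnoc g true) (m + 1) = q := by
      rw [hstep, hlasteq]
      have h2 := hg.2.2
      rw [← hini, hgt_init p _ m le_rfl] at h2
      simp only [eps, if_true]
      omega
    refine ⟨(hmem _).2 ⟨fun k hk => ?_, hend⟩, hlasteq⟩
    rcases Nat.lt_or_ge k (m + 1) with hk' | hk'
    · rw [← hgt_init p (fsnoc g true) k (by omega), hini]
      exact hg.2.1 k (by omega)
    · have hkm : k = m + 1 := by omega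
      rw [hkm, hend]; omega
  · intro f hf
    rw [Finset.mem_coe, Finset.mem_filter] at hf
    conv_rhs => rw [← fsnoc_finit_self f, hf.2]
  · intro g _
    exact finit_fsnoc g true

lemma PF_filter_false (p q : ℤ) (m : ℕ) (hq : 0 ≤ q) :
    ((PF p q (m + 1)).filter (fun f => ¬ f (Fin.last m) = true)).card
      = (PF p (q + 1) m).card := by
  classical
  have hlast : (Fin.last m : ℕ) = m := rfl
  have hmem : ∀ f, f ∈ PF p q (m + 1) ↔
      ((∀ k ≤ m + 1, 0 ≤ hgt p f k) ∧ hgt p f (m + 1) = q) := by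
    intro f; rw [PF, Finset.mem_filter]; simp
  have hstep : ∀ f : Fin (m + 1) → Bool,
      hgt p f (m + 1) = hgt p f m + eps (f (Fin.last m)) := by
    intro f; exact hgt_succ p f m (Nat.lt_succ_self m)
  refine Finset.card_nbij' (i := finit) (j := fun g => fsnoc g false) ?_ ?_ ?_ ?_
  · intro f hf
    rw [Finset.mem_coe, Finset.mem_filter] at hf
    obtain ⟨hf1, hf2⟩ := hf
    rw [Bool.not_eq_true] at hf2
    rw [hmem] at hf1
    rw [Finset.mem_coe, PF, Finset.mem_filter]
    refine ⟨Finset.mem_univ _, fun k hk => ?_, ?_⟩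
    · rw [hgt_init p f k hk]; exact hf1.1 k (by omega)
    · rw [hgt_init p f m le_rfl]
      have h2 := hstep f
      rw [hf1.2, hf2] at h2
      simp only [eps, Bool.false_eq_true, if_false] at h2
      omega
  · intro g hg
    rw [PF, Finset.mem_coe, Finset.mem_filter] at hg
    rw [Finset.mem_coe, Finset.mem_filter]
    have hini : finit (fsnoc g false) = g := finit_fsnoc g false
    have hlasteq : fsnoc g false (Fin.last m) = false := fsnoc_last g false
    have hend : hgt p (fsnoc g false) (m + 1) = q := by
      rw [hstep, hlasteq]
      have h2 := hg.2.2
      rw [← hini, hgt_init p _ m le_rfl] at h2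
      simp only [eps, Bool.false_eq_true, if_false]
      omega
    refine ⟨(hmem _).2 ⟨fun k hk => ?_, hend⟩, by simp [hlasteq]⟩
    rcases Nat.lt_or_ge k (m + 1) with hk' | hk'
    · rw [← hgt_init p (fsnoc g false) k (by omega), hini]
      exact hg.2.1 k (by omega)
    · have hkm : k = m + 1 := by omega
      rw [hkm, hend]; omega
  · intro f hf
    rw [Finset.mem_coe, Finset.mem_filter] at hf
    have hval : f (Fin.last m) = false := by
      rw [← Bool.not_eq_true]; exact hf.2
    conv_rhs => rw [← fsnoc_finit_self f, hval]
  · intro g _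
    exact finit_fsnoc g false

lemma PF_succ (p q : ℤ) (m : ℕ) (hq : 0 ≤ q) :
    (PF p q (m + 1)).card = (PF p (q + 1) m).card + (PF p (q - 1) m).card := by
  classical
  have hsplit := Finset.card_filter_add_card_filter_not
    (s := PF p q (m + 1)) (p := fun f => f (Fin.last m) = true)
  rw [← hsplit, PF_filter_true p q m hq, PF_filter_false p q m hq, Nat.add_comm]

lemma aCount_eq_card : ∀ (m : ℕ) (p q : ℤ), 0 ≤ p → 0 ≤ q →
    aCount p q m = ((PF p q m).card : ℤ) := by
  intro m
  induction m with
  | zero =>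
    intro p q hp hq
    rw [aCount_zero p q hp hq, PF_zero]
    by_cases h : p = q
    · rw [if_pos h, if_pos ⟨h, hp⟩]
    · rw [if_neg h, if_neg (by tauto)]
  | succ m IH =>
    intro p q hp hq
    rw [aCount_succ_q, PF_succ p q m hq]
    push_cast
    rw [IH p (q + 1) hp (by omega)]
    rcases lt_or_ge q 1 with h1 | h1
    · have hq0 : q = 0 := by omega
      subst hq0
      norm_num
      rw [aCount_negone_right, PF_neg_q m (by norm_num)]
      simp
    · rw [IH p (q - 1) hp (by omega)]

lemma aCount_eq_card' (m : ℕ) (p q : ℤ) (hp : 0 ≤ p) (hq : -1 ≤ q) :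
    aCount p q m = ((PF p q m).card : ℤ) := by
  rcases lt_or_ge q 0 with h | h
  · have hq1 : q = -1 := by omega
    subst hq1
    rw [aCount_negone_right, PF_neg_q m (by norm_num)]
    simp
  · exact aCount_eq_card m p q hp h

/-! ### Word-side auxiliary machinery -/

noncomputable def Dh (m : ℕ) (w : Fin m → GLetter) (k : ℕ) : ℤ :=
  (cnt m w .two k : ℤ) - (cnt m w .twobar k : ℤ)

lemma cnt_cast (m : ℕ) (w : Fin m → GLetter) (x : GLetter) (k : ℕ) :
    ((cnt m w x k : ℕ) : ℤ)
      = ∑ t : Fin m, (if (t : ℕ) < k then (if w t = x then (1 : ℤ) else 0) else 0) := by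
  rw [cnt, Finset.card_filter]
  push_cast
  refine Finset.sum_congr rfl fun t _ => ?_
  by_cases h1 : (t : ℕ) < k <;> by_cases h2 : w t = x <;> simp [h1, h2]

lemma Dh_zero (m : ℕ) (w : Fin m → GLetter) : Dh m w 0 = 0 := by
  have h : ∀ x, cnt m w x 0 = 0 := by
    intro x
    rw [cnt]
    apply Finset.card_eq_zero.2
    apply Finset.filter_false_of_mem
    intro t _ ht
    omega
  simp [Dh, h]

lemma Dh_succ (m : ℕ) (w : Fin m → GLetter) (k : ℕ) (hk : k < m) :
    Dh m w (k + 1) = Dh m w k +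
      (if w ⟨k, hk⟩ = .two then 1 else if w ⟨k, hk⟩ = .twobar then -1 else 0) := by
  unfold Dh
  rw [cnt_cast, cnt_cast, cnt_cast, cnt_cast,
    sum_lt_succ_step (fun t => if w t = .two then (1 : ℤ) else 0) k hk,
    sum_lt_succ_step (fun t => if w t = .twobar then (1 : ℤ) else 0) k hk]
  cases h : w ⟨k, hk⟩ <;> simp [h] <;> ring

lemma cnt_single {m : ℕ} {w : Fin m → GLetter} {x : GLetter} {a : ℕ} (ha : a < m)
    (hw : ∀ t : Fin m, w t = x ↔ (t : ℕ) = a) (k : ℕ) :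
    cnt m w x k = if a < k then 1 else 0 := by
  unfold cnt
  by_cases h : a < k
  · rw [if_pos h, Finset.card_eq_one]
    refine ⟨⟨a, ha⟩, ?_⟩
    ext t
    simp only [Finset.mem_filter, Finset.mem_univ, true_and, Finset.mem_singleton]
    constructor
    · rintro ⟨-, h2⟩
      exact Fin.ext ((hw t).1 h2)
    · rintro rfl
      exact ⟨h, (hw _).2 rfl⟩
  · rw [if_neg h, Finset.card_eq_zero]
    apply Finset.filter_false_of_mem
    rintro t - ⟨h1, h2⟩
    have := (hw t).1 h2
    omega

lemma cnt_le (m : ℕ) (w : Fin m → GLetter) (x : GLetter) (k : ℕ) :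
    cnt m w x k ≤ k := by
  unfold cnt
  have h2 : (Finset.univ.filter (fun i : Fin m => (i : ℕ) < k ∧ w i = x)).card
      ≤ (Finset.range k).card := by
    apply Finset.card_le_card_of_injOn (fun t : Fin m => (t : ℕ))
    · intro t ht
      rw [Finset.mem_coe, Finset.mem_filter] at ht
      exact Finset.mem_range.2 ht.2.1
    · intro s _ t _ hst
      exact Fin.ext hst
  simpa using h2

lemma hgt_sub_one {m : ℕ} (p : ℤ) (f : Fin m → Bool) (k : ℕ) :
    hgt (p - 1) f k = hgt p f k - 1 := by
  unfold hgt; ring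

lemma segGen {M : ℕ} (w : Fin M → GLetter) (c L : ℕ) (hcL : c + L ≤ M) (f : Fin L → Bool)
    (hf : ∀ (r : ℕ) (hr : r < L),
      (f ⟨r, hr⟩ = true → w ⟨c + r, by omega⟩ = GLetter.two) ∧
      (f ⟨r, hr⟩ = false → w ⟨c + r, by omega⟩ = GLetter.twobar)) :
    ∀ r, r ≤ L → Dh M w (c + r) = hgt (Dh M w c) f r := by
  intro r
  induction r with
  | zero =>
    intro _
    rw [Nat.add_zero, hgt_zero]
  | succ r ih =>
    intro hr
    have hr' : r < L := by omega
    have e : c + (r + 1) = (c + r) + 1 := rfl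
    rw [e, Dh_succ M w (c + r) (by omega), hgt_succ _ f r hr', ih (by omega)]
    congr 1
    cases hb : f ⟨r, hr'⟩
    · rw [(hf r hr').2 hb]
      simp [eps]
    · rw [(hf r hr').1 hb]
      simp [eps]

def tb (b : Bool) : GLetter := if b then .two else .twobar

lemma tb_ne_one (b : Bool) : tb b ≠ .one := by cases b <;> simp [tb]

lemma tb_ne_onebar (b : Bool) : tb b ≠ .onebar := by cases b <;> simp [tb]

lemma tb_eq_two_iff (b : Bool) : tb b = .two ↔ b = true := by cases b <;> simp [tb]

lemma tb_eq_twobar_iff (b : Bool) : tb b = .twobar ↔ b = false := by cases b <;> simp [tb]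
/-- Position condition: the unique `1̄` is at position `i`, the unique `1` at position `j`. -/
def PosCond (n i j : ℕ) (w : Fin (2*n) → GLetter) : Prop :=
  ∀ t : Fin (2*n), (w t = .onebar ↔ (t : ℕ) + 1 = i) ∧ (w t = .one ↔ (t : ℕ) + 1 = j)

section Main

variable {n i j : ℕ}

lemma posOnebar (hi : 1 ≤ i) (hij : i < j) (hj : j ≤ 2*n) {w : Fin (2*n) → GLetter} (hp : PosCond n i j w) (k : ℕ) :
    cnt (2*n) w .onebar k = if i - 1 < k then 1 else 0 := by
  refine cnt_single (by omega) (fun t => ?_) k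
  rw [(hp t).1]
  omega

lemma posOne (hi : 1 ≤ i) (hij : i < j) (hj : j ≤ 2*n) {w : Fin (2*n) → GLetter} (hp : PosCond n i j w) (k : ℕ) :
    cnt (2*n) w .one k = if j - 1 < k then 1 else 0 := by
  refine cnt_single (by omega) (fun t => ?_) k
  rw [(hp t).2]
  omega

lemma gessel_iff (hi : 1 ≤ i) (hij : i < j) (hj : j ≤ 2*n) {w : Fin (2*n) → GLetter} (hp : PosCond n i j w) :
    IsGessel (2*n) w ↔
      ∀ k ≤ 2*n, 0 ≤ Dh (2*n) w k ∧ (i ≤ k → k < j → 1 ≤ Dh (2*n) w k) := by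
  constructor
  · intro hG k hk
    obtain ⟨h1, h2⟩ := hG k hk
    rw [posOnebar hi hij hj hp k, posOne hi hij hj hp k] at h2
    simp only [Dh]
    constructor
    · omega
    · intro ha hb
      split_ifs at h2 <;> omega
  · intro hD k hk
    obtain ⟨h1, h2⟩ := hD k hk
    simp only [Dh] at h1
    constructor
    · omega
    · rw [posOnebar hi hij hj hp k, posOne hi hij hj hp k]
      by_cases hik : i ≤ k ∧ k < j
      · have h3 := h2 hik.1 hik.2
        simp only [Dh] at h3
        split_ifs <;> omega
      · split_ifs <;> omega

lemma complete_iff (hi : 1 ≤ i) (hij : i < j) (hj : j ≤ 2*n) {w : Fin (2*n) → GLetter} (hp : PosCond n i j w) :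
    IsCompleteGW (2*n) w ↔ Dh (2*n) w (2*n) = 0 := by
  unfold IsCompleteGW
  rw [posOnebar hi hij hj hp, posOne hi hij hj hp, if_pos (by omega), if_pos (by omega)]
  simp only [Dh]
  constructor
  · rintro ⟨-, h⟩; omega
  · intro h; exact ⟨by trivial, by omega⟩

lemma stepbar (hi : 1 ≤ i) (hij : i < j) (hj : j ≤ 2*n) {w : Fin (2*n) → GLetter} (hp : PosCond n i j w) :
    Dh (2*n) w i = Dh (2*n) w (i-1) := by
  have hs := Dh_succ (2*n) w (i-1) (by omega)
  have hw : w ⟨i-1, by omega⟩ = .onebar := (hp ⟨i-1, by omega⟩).1.mpr (by simp; omega)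
  conv_lhs => rw [show i = i - 1 + 1 by omega]
  rw [hs, hw]
  simp

lemma stepone (hi : 1 ≤ i) (hij : i < j) (hj : j ≤ 2*n) {w : Fin (2*n) → GLetter} (hp : PosCond n i j w) :
    Dh (2*n) w j = Dh (2*n) w (j-1) := by
  have hs := Dh_succ (2*n) w (j-1) (by omega)
  have hw : w ⟨j-1, by omega⟩ = .one := (hp ⟨j-1, by omega⟩).2.mpr (by simp; omega)
  conv_lhs => rw [show j = j - 1 + 1 by omega]
  rw [hs, hw]
  simp

lemma Dh_le (m : ℕ) (w : Fin m → GLetter) (k : ℕ) : Dh m w k ≤ k := by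
  have := cnt_le m w .two k
  simp only [Dh]
  omega

lemma hleaf (hi : 1 ≤ i) (hij : i < j) (hj : j ≤ 2*n) {w : Fin (2*n) → GLetter} (hp : PosCond n i j w) (s : Fin (2*n))
    (h1 : (s : ℕ) + 1 ≠ i) (h2 : (s : ℕ) + 1 ≠ j) :
    w s = .two ∨ w s = .twobar := by
  cases hv : w s
  · exact absurd ((hp s).2.mp hv) h2
  · exact Or.inl rfl
  · exact absurd ((hp s).1.mp hv) h1
  · exact Or.inr rfl

end Main

noncomputable def PhiW (n i j : ℕ) (hi : 1 ≤ i) (hij : i < j) (hj : j ≤ 2*n)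
    (w : Fin (2*n) → GLetter) :
    (Fin (i-1) → Bool) × ((Fin (j-i-1) → Bool) × (Fin (2*n-j) → Bool)) :=
  (fun t => if w ⟨0 + t.1, by have := t.isLt; omega⟩ = .two then true else false,
   (fun t => if w ⟨i + t.1, by have := t.isLt; omega⟩ = .two then true else false,
    fun t => if w ⟨j + t.1, by have := t.isLt; omega⟩ = .two then true else false))

noncomputable def PsiW (n i j : ℕ) (hi : 1 ≤ i) (hij : i < j) (hj : j ≤ 2*n)
    (f1 : Fin (i-1) → Bool) (f2 : Fin (j-i-1) → Bool) (f3 : Fin (2*n-j) → Bool) :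
    Fin (2*n) → GLetter := fun s =>
  if c1 : (s : ℕ) + 1 = i then .onebar
  else if c2 : (s : ℕ) + 1 = j then .one
  else if c3 : (s : ℕ) < i - 1 then tb (f1 ⟨s.1, c3⟩)
  else if c4 : (s : ℕ) < j - 1 then tb (f2 ⟨s.1 - i, by have := s.isLt; omega⟩)
  else tb (f3 ⟨s.1 - j, by have := s.isLt; omega⟩)

section Main2

variable {n i j : ℕ}

/-- The three `segGen` hypotheses for the extracted functions, valid for any word with the
position condition. -/
lemma phi_rel1 (hi : 1 ≤ i) (hij : i < j) (hj : j ≤ 2*n) {w : Fin (2*n) → GLetter}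
    (hp : PosCond n i j w) :
    ∀ (r : ℕ) (hr : r < i - 1),
      ((PhiW n i j hi hij hj w).1 ⟨r, hr⟩ = true → w ⟨0 + r, by omega⟩ = GLetter.two) ∧
      ((PhiW n i j hi hij hj w).1 ⟨r, hr⟩ = false → w ⟨0 + r, by omega⟩ = GLetter.twobar) := by
  intro r hr
  rcases hleaf hi hij hj hp ⟨0 + r, by omega⟩ (by simp; omega) (by simp; omega) with hv | hv
  · refine ⟨fun _ => hv, fun h => ?_⟩
    simp only [PhiW, if_pos hv] at h
    exact absurd h (by simp)
  · refine ⟨fun h => ?_, fun _ => hv⟩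
    simp only [PhiW, if_neg (by rw [hv]; simp : ¬ w ⟨0 + r, by omega⟩ = GLetter.two)] at h
    exact absurd h (by simp)

lemma phi_rel2 (hi : 1 ≤ i) (hij : i < j) (hj : j ≤ 2*n) {w : Fin (2*n) → GLetter}
    (hp : PosCond n i j w) :
    ∀ (r : ℕ) (hr : r < j - i - 1),
      ((PhiW n i j hi hij hj w).2.1 ⟨r, hr⟩ = true → w ⟨i + r, by omega⟩ = GLetter.two) ∧
      ((PhiW n i j hi hij hj w).2.1 ⟨r, hr⟩ = false → w ⟨i + r, by omega⟩ = GLetter.twobar) := by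
  intro r hr
  rcases hleaf hi hij hj hp ⟨i + r, by omega⟩ (by simp; omega) (by simp; omega) with hv | hv
  · refine ⟨fun _ => hv, fun h => ?_⟩
    simp only [PhiW, if_pos hv] at h
    exact absurd h (by simp)
  · refine ⟨fun h => ?_, fun _ => hv⟩
    simp only [PhiW, if_neg (by rw [hv]; simp : ¬ w ⟨i + r, by omega⟩ = GLetter.two)] at h
    exact absurd h (by simp)

lemma phi_rel3 (hi : 1 ≤ i) (hij : i < j) (hj : j ≤ 2*n) {w : Fin (2*n) → GLetter}
    (hp : PosCond n i j w) :
    ∀ (r : ℕ) (hr : r < 2*n - j),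
      ((PhiW n i j hi hij hj w).2.2 ⟨r, hr⟩ = true → w ⟨j + r, by omega⟩ = GLetter.two) ∧
      ((PhiW n i j hi hij hj w).2.2 ⟨r, hr⟩ = false → w ⟨j + r, by omega⟩ = GLetter.twobar) := by
  intro r hr
  rcases hleaf hi hij hj hp ⟨j + r, by omega⟩ (by simp; omega) (by simp; omega) with hv | hv
  · refine ⟨fun _ => hv, fun h => ?_⟩
    simp only [PhiW, if_pos hv] at h
    exact absurd h (by simp)
  · refine ⟨fun h => ?_, fun _ => hv⟩
    simp only [PhiW, if_neg (by rw [hv]; simp : ¬ w ⟨j + r, by omega⟩ = GLetter.two)] at h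
    exact absurd h (by simp)

end Main2

section Main3

variable {n i j : ℕ}

lemma psi_pos (hi : 1 ≤ i) (hij : i < j) (hj : j ≤ 2*n)
    (f1 : Fin (i-1) → Bool) (f2 : Fin (j-i-1) → Bool) (f3 : Fin (2*n-j) → Bool) :
    PosCond n i j (PsiW n i j hi hij hj f1 f2 f3) := by
  intro t
  unfold PsiW
  by_cases c1 : (t : ℕ) + 1 = i
  · rw [dif_pos c1]
    constructor
    · exact ⟨fun _ => c1, fun _ => rfl⟩
    · refine ⟨fun h => GLetter.noConfusion h, fun h => absurd h (by omega)⟩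
  · rw [dif_neg c1]
    by_cases c2 : (t : ℕ) + 1 = j
    · rw [dif_pos c2]
      constructor
      · refine ⟨fun h => GLetter.noConfusion h, fun h => absurd h c1⟩
      · exact ⟨fun _ => c2, fun _ => rfl⟩
    · rw [dif_neg c2]
      by_cases c3 : (t : ℕ) < i - 1
      · rw [dif_pos c3]
        exact ⟨⟨fun h => absurd h (tb_ne_onebar _), fun h => absurd h c1⟩,
               ⟨fun h => absurd h (tb_ne_one _), fun h => absurd h c2⟩⟩
      · rw [dif_neg c3]
        by_cases c4 : (t : ℕ) < j - 1
        · rw [dif_pos c4]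
          exact ⟨⟨fun h => absurd h (tb_ne_onebar _), fun h => absurd h c1⟩,
                 ⟨fun h => absurd h (tb_ne_one _), fun h => absurd h c2⟩⟩
        · rw [dif_neg c4]
          exact ⟨⟨fun h => absurd h (tb_ne_onebar _), fun h => absurd h c1⟩,
                 ⟨fun h => absurd h (tb_ne_one _), fun h => absurd h c2⟩⟩

lemma psi_rel1 (hi : 1 ≤ i) (hij : i < j) (hj : j ≤ 2*n)
    (f1 : Fin (i-1) → Bool) (f2 : Fin (j-i-1) → Bool) (f3 : Fin (2*n-j) → Bool) :
    ∀ (r : ℕ) (hr : r < i - 1),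
      (f1 ⟨r, hr⟩ = true → PsiW n i j hi hij hj f1 f2 f3 ⟨0 + r, by omega⟩ = GLetter.two) ∧
      (f1 ⟨r, hr⟩ = false → PsiW n i j hi hij hj f1 f2 f3 ⟨0 + r, by omega⟩ = GLetter.twobar) := by
  intro r hr
  have hv : PsiW n i j hi hij hj f1 f2 f3 ⟨0 + r, by omega⟩ = tb (f1 ⟨r, hr⟩) := by
    unfold PsiW
    rw [dif_neg (show ¬(0 + r + 1 = i) by omega), dif_neg (show ¬(0 + r + 1 = j) by omega),
      dif_pos (show 0 + r < i - 1 by omega)]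
    congr 2
    exact Fin.ext (show 0 + r = r by omega)
  rw [hv]
  exact ⟨fun h => by rw [h]; rfl, fun h => by rw [h]; rfl⟩

lemma psi_rel2 (hi : 1 ≤ i) (hij : i < j) (hj : j ≤ 2*n)
    (f1 : Fin (i-1) → Bool) (f2 : Fin (j-i-1) → Bool) (f3 : Fin (2*n-j) → Bool) :
    ∀ (r : ℕ) (hr : r < j - i - 1),
      (f2 ⟨r, hr⟩ = true → PsiW n i j hi hij hj f1 f2 f3 ⟨i + r, by omega⟩ = GLetter.two) ∧
      (f2 ⟨r, hr⟩ = false → PsiW n i j hi hij hj f1 f2 f3 ⟨i + r, by omega⟩ = GLetter.twobar) := by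
  intro r hr
  have hv : PsiW n i j hi hij hj f1 f2 f3 ⟨i + r, by omega⟩ = tb (f2 ⟨r, hr⟩) := by
    unfold PsiW
    rw [dif_neg (show ¬(i + r + 1 = i) by omega), dif_neg (show ¬(i + r + 1 = j) by omega),
      dif_neg (show ¬(i + r < i - 1) by omega), dif_pos (show i + r < j - 1 by omega)]
    congr 2
    exact Fin.ext (show i + r - i = r by omega)
  rw [hv]
  exact ⟨fun h => by rw [h]; rfl, fun h => by rw [h]; rfl⟩

lemma psi_rel3 (hi : 1 ≤ i) (hij : i < j) (hj : j ≤ 2*n)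
    (f1 : Fin (i-1) → Bool) (f2 : Fin (j-i-1) → Bool) (f3 : Fin (2*n-j) → Bool) :
    ∀ (r : ℕ) (hr : r < 2*n - j),
      (f3 ⟨r, hr⟩ = true → PsiW n i j hi hij hj f1 f2 f3 ⟨j + r, by omega⟩ = GLetter.two) ∧
      (f3 ⟨r, hr⟩ = false → PsiW n i j hi hij hj f1 f2 f3 ⟨j + r, by omega⟩ = GLetter.twobar) := by
  intro r hr
  have hv : PsiW n i j hi hij hj f1 f2 f3 ⟨j + r, by omega⟩ = tb (f3 ⟨r, hr⟩) := by
    unfold PsiW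
    rw [dif_neg (show ¬(j + r + 1 = i) by omega), dif_neg (show ¬(j + r + 1 = j) by omega),
      dif_neg (show ¬(j + r < i - 1) by omega), dif_neg (show ¬(j + r < j - 1) by omega)]
    congr 2
    exact Fin.ext (show j + r - j = r by omega)
  rw [hv]
  exact ⟨fun h => by rw [h]; rfl, fun h => by rw [h]; rfl⟩

end Main3

section Main4

variable {n i j : ℕ}

lemma phi_mem (hi : 1 ≤ i) (hij : i < j) (hj : j ≤ 2*n) {w : Fin (2*n) → GLetter}
    (hG : IsGessel (2*n) w) (hC : IsCompleteGW (2*n) w) (hp : PosCond n i j w)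
    {κ1 κ2 : ℤ} (hk1 : Dh (2*n) w (i-1) = κ1) (hk2 : Dh (2*n) w (j-1) = κ2) :
    PhiW n i j hi hij hj w ∈
      PF 0 κ1 (i-1) ×ˢ (PF (κ1-1) (κ2-1) (j-i-1) ×ˢ PF κ2 0 (2*n-j)) := by
  have hD := (gessel_iff hi hij hj hp).1 hG
  have hDe := (complete_iff hi hij hj hp).1 hC
  have hseg1 := segGen w 0 (i-1) (by omega) (PhiW n i j hi hij hj w).1
    (phi_rel1 hi hij hj hp)
  have hseg2 := segGen w i (j-i-1) (by omega) (PhiW n i j hi hij hj w).2.1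
    (phi_rel2 hi hij hj hp)
  have hseg3 := segGen w j (2*n-j) (by omega) (PhiW n i j hi hij hj w).2.2
    (phi_rel3 hi hij hj hp)
  have hDi : Dh (2*n) w i = κ1 := by rw [stepbar hi hij hj hp]; exact hk1
  have hDj : Dh (2*n) w j = κ2 := by rw [stepone hi hij hj hp]; exact hk2
  rw [Finset.mem_product, Finset.mem_product]
  refine ⟨?_, ?_, ?_⟩
  · simp only [PF, Finset.mem_filter, Finset.mem_univ, true_and]
    constructor
    · intro k hk
      have h5 := hseg1 k hk
      rw [Nat.zero_add, Dh_zero] at h5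
      rw [← h5]
      exact (hD k (by omega)).1
    · have h5 := hseg1 (i-1) le_rfl
      rw [Nat.zero_add, Dh_zero] at h5
      rw [← h5]
      exact hk1
  · simp only [PF, Finset.mem_filter, Finset.mem_univ, true_and]
    constructor
    · intro k hk
      have h5 := hseg2 k hk
      rw [hDi] at h5
      rw [hgt_sub_one, ← h5]
      have h6 := (hD (i+k) (by omega)).2 (by omega) (by omega)
      omega
    · have h5 := hseg2 (j-i-1) le_rfl
      rw [hDi, show i + (j-i-1) = j-1 by omega, hk2] at h5
      rw [hgt_sub_one, ← h5]
  · simp only [PF, Finset.mem_filter, Finset.mem_univ, true_and]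
    constructor
    · intro k hk
      have h5 := hseg3 k hk
      rw [hDj] at h5
      rw [← h5]
      exact (hD (j+k) (by omega)).1
    · have h5 := hseg3 (2*n-j) le_rfl
      rw [hDj, show j + (2*n-j) = 2*n by omega, hDe] at h5
      exact h5.symm

lemma psi_mem (hi : 1 ≤ i) (hij : i < j) (hj : j ≤ 2*n)
    (f1 : Fin (i-1) → Bool) (f2 : Fin (j-i-1) → Bool) (f3 : Fin (2*n-j) → Bool)
    {κ1 κ2 : ℤ} (h1 : f1 ∈ PF 0 κ1 (i-1)) (h2 : f2 ∈ PF (κ1-1) (κ2-1) (j-i-1))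
    (h3 : f3 ∈ PF κ2 0 (2*n-j)) :
    (IsGessel (2*n) (PsiW n i j hi hij hj f1 f2 f3) ∧
      IsCompleteGW (2*n) (PsiW n i j hi hij hj f1 f2 f3) ∧
      PosCond n i j (PsiW n i j hi hij hj f1 f2 f3)) ∧
    Dh (2*n) (PsiW n i j hi hij hj f1 f2 f3) (i-1) = κ1 ∧
    Dh (2*n) (PsiW n i j hi hij hj f1 f2 f3) (j-1) = κ2 := by
  simp only [PF, Finset.mem_filter, Finset.mem_univ, true_and] at h1 h2 h3
  have hp := psi_pos hi hij hj f1 f2 f3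
  have hseg1 := segGen (PsiW n i j hi hij hj f1 f2 f3) 0 (i-1) (by omega) f1
    (psi_rel1 hi hij hj f1 f2 f3)
  have hseg2 := segGen (PsiW n i j hi hij hj f1 f2 f3) i (j-i-1) (by omega) f2
    (psi_rel2 hi hij hj f1 f2 f3)
  have hseg3 := segGen (PsiW n i j hi hij hj f1 f2 f3) j (2*n-j) (by omega) f3
    (psi_rel3 hi hij hj f1 f2 f3)
  have hk1' : Dh (2*n) (PsiW n i j hi hij hj f1 f2 f3) (i-1) = κ1 := by
    have h5 := hseg1 (i-1) le_rfl
    rw [Nat.zero_add, Dh_zero] at h5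
    rw [h5, h1.2]
  have hDi : Dh (2*n) (PsiW n i j hi hij hj f1 f2 f3) i = κ1 := by
    rw [stepbar hi hij hj hp]; exact hk1'
  have hk2' : Dh (2*n) (PsiW n i j hi hij hj f1 f2 f3) (j-1) = κ2 := by
    have h5 := hseg2 (j-i-1) le_rfl
    rw [show i + (j-i-1) = j - 1 by omega, hDi] at h5
    have h6 := h2.2
    rw [hgt_sub_one] at h6
    rw [h5]
    omega
  have hDj : Dh (2*n) (PsiW n i j hi hij hj f1 f2 f3) j = κ2 := by
    rw [stepone hi hij hj hp]; exact hk2'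
  have hDfull : ∀ k ≤ 2*n, 0 ≤ Dh (2*n) (PsiW n i j hi hij hj f1 f2 f3) k ∧
      (i ≤ k → k < j → 1 ≤ Dh (2*n) (PsiW n i j hi hij hj f1 f2 f3) k) := by
    intro k hk
    by_cases hkc : k ≤ i - 1
    · have h5 := hseg1 k hkc
      rw [Nat.zero_add, Dh_zero] at h5
      constructor
      · rw [h5]; exact h1.1 k hkc
      · intro ha hb; omega
    · by_cases hkc2 : k ≤ j - 1
      · have h5 := hseg2 (k-i) (by omega)
        rw [show i + (k-i) = k by omega, hDi] at h5
        have h6 := h2.1 (k-i) (by omega)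
        rw [hgt_sub_one] at h6
        constructor
        · rw [h5]; omega
        · intro _ _; rw [h5]; omega
      · have h5 := hseg3 (k-j) (by omega)
        rw [show j + (k-j) = k by omega, hDj] at h5
        have h6 := h3.1 (k-j) (by omega)
        constructor
        · rw [h5]; exact h6
        · intro ha hb; omega
  refine ⟨⟨(gessel_iff hi hij hj hp).2 hDfull, (complete_iff hi hij hj hp).2 ?_, hp⟩,
    hk1', hk2'⟩
  have h5 := hseg3 (2*n-j) le_rfl
  rw [show j + (2*n-j) = 2*n by omega, hDj] at h5
  rw [h5, h3.2]

lemma psi_phi (hi : 1 ≤ i) (hij : i < j) (hj : j ≤ 2*n) {w : Fin (2*n) → GLetter}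
    (hp : PosCond n i j w) :
    PsiW n i j hi hij hj (PhiW n i j hi hij hj w).1 (PhiW n i j hi hij hj w).2.1
      (PhiW n i j hi hij hj w).2.2 = w := by
  funext s
  unfold PsiW
  simp only [PhiW]
  by_cases c1 : (s : ℕ) + 1 = i
  · rw [dif_pos c1]
    exact ((hp s).1.mpr c1).symm
  · rw [dif_neg c1]
    by_cases c2 : (s : ℕ) + 1 = j
    · rw [dif_pos c2]
      exact ((hp s).2.mpr c2).symm
    · rw [dif_neg c2]
      rcases hleaf hi hij hj hp s c1 c2 with hv | hv
      · by_cases c3 : (s : ℕ) < i - 1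
        · rw [dif_pos c3]
          have e : (⟨0 + (s : ℕ), by omega⟩ : Fin (2*n)) = s := Fin.ext (show 0 + (s:ℕ) = (s:ℕ) by omega)
          rw [e, if_pos hv, hv]
          rfl
        · rw [dif_neg c3]
          by_cases c4 : (s : ℕ) < j - 1
          · rw [dif_pos c4]
            have e : (⟨i + ((s : ℕ) - i), by omega⟩ : Fin (2*n)) = s := Fin.ext (show i + ((s:ℕ) - i) = (s:ℕ) by omega)
            rw [e, if_pos hv, hv]
            rfl
          · rw [dif_neg c4]
            have e : (⟨j + ((s : ℕ) - j), by omega⟩ : Fin (2*n)) = s := Fin.ext (show j + ((s:ℕ) - j) = (s:ℕ) by omega)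
            rw [e, if_pos hv, hv]
            rfl
      · by_cases c3 : (s : ℕ) < i - 1
        · rw [dif_pos c3]
          have e : (⟨0 + (s : ℕ), by omega⟩ : Fin (2*n)) = s := Fin.ext (show 0 + (s:ℕ) = (s:ℕ) by omega)
          rw [e, if_neg (by rw [hv]; simp), hv]
          rfl
        · rw [dif_neg c3]
          by_cases c4 : (s : ℕ) < j - 1
          · rw [dif_pos c4]
            have e : (⟨i + ((s : ℕ) - i), by omega⟩ : Fin (2*n)) = s := Fin.ext (show i + ((s:ℕ) - i) = (s:ℕ) by omega)
            rw [e, if_neg (by rw [hv]; simp), hv]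
            rfl
          · rw [dif_neg c4]
            have e : (⟨j + ((s : ℕ) - j), by omega⟩ : Fin (2*n)) = s := Fin.ext (show j + ((s:ℕ) - j) = (s:ℕ) by omega)
            rw [e, if_neg (by rw [hv]; simp), hv]
            rfl

lemma phi_psi (hi : 1 ≤ i) (hij : i < j) (hj : j ≤ 2*n)
    (f1 : Fin (i-1) → Bool) (f2 : Fin (j-i-1) → Bool) (f3 : Fin (2*n-j) → Bool) :
    PhiW n i j hi hij hj (PsiW n i j hi hij hj f1 f2 f3) = (f1, (f2, f3)) := by
  simp only [PhiW, Prod.mk.injEq]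
  refine ⟨?_, ?_, ?_⟩
  · funext t
    cases ht : f1 t
    · rw [if_neg (by rw [(psi_rel1 hi hij hj f1 f2 f3 t.1 t.isLt).2 ht]; simp)]
    · rw [if_pos ((psi_rel1 hi hij hj f1 f2 f3 t.1 t.isLt).1 ht)]
  · funext t
    cases ht : f2 t
    · rw [if_neg (by rw [(psi_rel2 hi hij hj f1 f2 f3 t.1 t.isLt).2 ht]; simp)]
    · rw [if_pos ((psi_rel2 hi hij hj f1 f2 f3 t.1 t.isLt).1 ht)]
  · funext t
    cases ht : f3 t
    · rw [if_neg (by rw [(psi_rel3 hi hij hj f1 f2 f3 t.1 t.isLt).2 ht]; simp)]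
    · rw [if_pos ((psi_rel3 hi hij hj f1 f2 f3 t.1 t.isLt).1 ht)]

end Main4

/-- Fix `1 ≤ i < j ≤ 2n`. The number of complete Gessel words of length `2n` with the
single `1̄` at position `i` and the single `1` at position `j` equals
`∑_{k₁=1}^{i-1} ∑_{k₂=0}^{j-1} a_{0,k₁}(i-1) a_{k₁-1,k₂-1}(j-i-1) a_{k₂,0}(2n-j)`. -/
theorem gessel_onebar_one_fixed_positions (n i j : ℕ) (hi : 1 ≤ i) (hij : i < j)
    (hj : j ≤ 2 * n) :
    (((Finset.univ : Finset (Fin (2 * n) → GLetter)).filter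
      (fun w => IsGessel (2 * n) w ∧ IsCompleteGW (2 * n) w ∧
        (∀ t : Fin (2 * n), (w t = .onebar ↔ (t : ℕ) + 1 = i) ∧
          (w t = .one ↔ (t : ℕ) + 1 = j)))).card : ℤ)
    = ∑ k₁ ∈ Finset.Icc 1 (i - 1), ∑ k₂ ∈ Finset.Icc 0 (j - 1),
        aCount 0 (k₁ : ℤ) (i - 1) * aCount ((k₁ : ℤ) - 1) ((k₂ : ℤ) - 1) (j - i - 1) *
          aCount (k₂ : ℤ) 0 (2 * n - j) := by
  classical
  have hmaps : ∀ w ∈ (Finset.univ : Finset (Fin (2 * n) → GLetter)).filter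
      (fun w => IsGessel (2 * n) w ∧ IsCompleteGW (2 * n) w ∧
        (∀ t : Fin (2 * n), (w t = .onebar ↔ (t : ℕ) + 1 = i) ∧
          (w t = .one ↔ (t : ℕ) + 1 = j))),
      (fun w => ((Dh (2*n) w (i-1)).toNat, (Dh (2*n) w (j-1)).toNat)) w ∈
        Finset.Icc 1 (i-1) ×ˢ Finset.Icc 0 (j-1) := by
    intro w hw
    rw [Finset.mem_filter] at hw
    obtain ⟨-, hG, hC, hp⟩ := hw
    have hD := (gessel_iff hi hij hj hp).1 hG
    have h1 : 1 ≤ Dh (2*n) w (i-1) := by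
      have h := (hD i (by omega)).2 le_rfl hij
      rw [stepbar hi hij hj hp] at h
      exact h
    have h2 := Dh_le (2*n) w (i-1)
    have h3 : 0 ≤ Dh (2*n) w (j-1) := (hD (j-1) (by omega)).1
    have h4 := Dh_le (2*n) w (j-1)
    rw [Finset.mem_product]
    constructor <;> simp only [Finset.mem_Icc] <;> omega
  have fiber_eq : ∀ k1 k2 : ℕ,
      (((Finset.univ : Finset (Fin (2 * n) → GLetter)).filter
        (fun w => IsGessel (2 * n) w ∧ IsCompleteGW (2 * n) w ∧
          (∀ t : Fin (2 * n), (w t = .onebar ↔ (t : ℕ) + 1 = i) ∧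
            (w t = .one ↔ (t : ℕ) + 1 = j)))).filter
        (fun w => ((Dh (2*n) w (i-1)).toNat, (Dh (2*n) w (j-1)).toNat) = (k1, k2))).card
      = (PF 0 (k1 : ℤ) (i-1) ×ˢ
          (PF ((k1 : ℤ)-1) ((k2 : ℤ)-1) (j-i-1) ×ˢ PF (k2 : ℤ) 0 (2*n-j))).card := by
    intro k1 k2
    apply Finset.card_nbij' (i := PhiW n i j hi hij hj)
      (j := fun x => PsiW n i j hi hij hj x.1 x.2.1 x.2.2)
    · intro w hw
      rw [Finset.mem_coe, Finset.mem_filter] at hw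
      obtain ⟨hwW, hwφ⟩ := hw
      rw [Finset.mem_filter] at hwW
      obtain ⟨-, hG, hC, hp⟩ := hwW
      rw [Prod.mk.injEq] at hwφ
      have hD := (gessel_iff hi hij hj hp).1 hG
      have h0 : 0 ≤ Dh (2*n) w (i-1) := (hD (i-1) (by omega)).1
      have h0' : 0 ≤ Dh (2*n) w (j-1) := (hD (j-1) (by omega)).1
      exact phi_mem hi hij hj hG hC hp (by omega) (by omega)
    · intro x hx
      obtain ⟨f1, f2, f3⟩ := x
      dsimp only
      rw [Finset.mem_coe, Finset.mem_product, Finset.mem_product] at hx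
      obtain ⟨hx1, hx2, hx3⟩ := hx
      have h := psi_mem hi hij hj f1 f2 f3 hx1 hx2 hx3
      rw [Finset.mem_coe, Finset.mem_filter, Finset.mem_filter]
      refine ⟨⟨Finset.mem_univ _, h.1.1, h.1.2.1, h.1.2.2⟩, ?_⟩
      rw [Prod.mk.injEq]
      have e1 := h.2.1
      have e2 := h.2.2
      constructor <;> omega
    · intro w hw
      rw [Finset.mem_coe, Finset.mem_filter, Finset.mem_filter] at hw
      exact psi_phi hi hij hj hw.1.2.2.2
    · intro x hx
      obtain ⟨f1, f2, f3⟩ := x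
      exact phi_psi hi hij hj f1 f2 f3
  rw [Finset.card_eq_sum_card_fiberwise hmaps, Finset.sum_product]
  push_cast
  refine Finset.sum_congr rfl fun k1 hk1 => Finset.sum_congr rfl fun k2 hk2 => ?_
  rw [Finset.mem_Icc] at hk1 hk2
  rw [fiber_eq k1 k2, Finset.card_product, Finset.card_product]
  rw [aCount_eq_card (i-1) 0 (k1 : ℤ) le_rfl (by omega),
    aCount_eq_card' (j-i-1) ((k1 : ℤ)-1) ((k2 : ℤ)-1) (by omega) (by omega),
    aCount_eq_card (2*n-j) (k2 : ℤ) 0 (by omega) le_rfl]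
  push_cast
  ring
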